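/- Let D1 and D2 be random variables taking values in the bounded interval [a, b] with a < b, such that P(D1 = a) > 0 and P(D1 = b) > 0, and such that the conditional distribution of ΔD = D2 − D1 given D1 = d is non-degenerate for all d in {a, b}. Then ΔD is not independent of D1. -/
import Mathlib

open MeasureTheory ProbabilityTheory

noncomputable def cov {Ω : Type*} [MeasurableSpace Ω] (μ : Measure Ω) (X Y : Ω → ℝ) : ℝ :=
  ∫ ω, (X ω - ∫ x, X x ∂μ) * (Y ω - ∫ x, Y x ∂μ) ∂μ

noncomputable def var {Ω : Type*} [MeasurableSpace Ω] (μ : Measure Ω) (X : Ω → ℝ) : ℝ :=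
  cov μ X X

/-- Conditional expectation of `X` given the σ-algebra generated by `W`. -/
noncomputable def cexp {Ω E : Type*} [MeasurableSpace Ω] [MeasurableSpace E]
    (μ : Measure Ω) (W : Ω → E) (X : Ω → ℝ) : Ω → ℝ :=
  μ[X | MeasurableSpace.comap W inferInstance]

/-- Conditional variance of `X` given the σ-algebra generated by `W`. -/
noncomputable def cvar {Ω E : Type*} [MeasurableSpace Ω] [MeasurableSpace E]
    (μ : Measure Ω) (W : Ω → E) (X : Ω → ℝ) : Ω → ℝ :=
  cexp μ W (fun ω => (X ω - cexp μ W X ω) ^ 2)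

/-- If `D1` and `D2` share the bounded support `[a, b]` and the conditional distribution of
`ΔD` given `D1 = d` is non-degenerate at the boundary points, then `ΔD` is not independent
of `D1`. -/
theorem stmt6 {Ω : Type*} [MeasurableSpace Ω] (μ : Measure Ω) [IsProbabilityMeasure μ]
    (D1 D2 : Ω → ℝ) (hm1 : Measurable D1) (hm2 : Measurable D2)
    (a b : ℝ) (hab : a < b)
    (hs1 : ∀ ω, D1 ω ∈ Set.Icc a b) (hs2 : ∀ ω, D2 ω ∈ Set.Icc a b)
    (ha : 0 < μ {ω | D1 ω = a}) (hb : 0 < μ {ω | D1 ω = b})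
    (hnd : ∀ d ∈ ({a, b} : Set ℝ), ∀ c : ℝ,
      Measure.map (fun ω => D2 ω - D1 ω) (ProbabilityTheory.cond μ {ω | D1 ω = d})
        ≠ Measure.dirac c) :
    ¬ IndepFun (fun ω => D2 ω - D1 ω) D1 μ := by
  intro hind
  set Δ : Ω → ℝ := fun ω => D2 ω - D1 ω with hΔ
  have hmΔ : Measurable Δ := hm2.sub hm1
  -- the two conditioning events
  have hmA : ∀ d : ℝ, MeasurableSet {ω | D1 ω = d} := fun d => hm1 (measurableSet_singleton d)
  -- key: independence implies the conditional law equals the unconditional law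
  have key : ∀ d : ℝ, μ {ω | D1 ω = d} ≠ 0 →
      Measure.map Δ (ProbabilityTheory.cond μ {ω | D1 ω = d}) = Measure.map Δ μ := by
    intro d hd
    ext s hs
    rw [Measure.map_apply hmΔ hs, Measure.map_apply hmΔ hs,
      ProbabilityTheory.cond_apply (hmA d) μ]
    have : {ω | D1 ω = d} = D1 ⁻¹' {d} := rfl
    have hmul := hind.measure_inter_preimage_eq_mul s {d} hs (measurableSet_singleton d)
    rw [Set.inter_comm, this, hmul]
    rw [mul_comm (μ (Δ ⁻¹' s)), ← mul_assoc, ENNReal.inv_mul_cancel (this ▸ hd) (measure_ne_top μ _), one_mul]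
  have hAa := key a ha.ne'
  have hAb := key b hb.ne'
  set ν := Measure.map Δ μ with hν
  have hinst : IsProbabilityMeasure ν := Measure.isProbabilityMeasure_map hmΔ.aemeasurable
  -- mass below 0 is zero (via conditioning on D1 = a)
  have hneg : ν {x : ℝ | x < 0} = 0 := by
    rw [← hAa, Measure.map_apply hmΔ (by exact measurableSet_lt measurable_id measurable_const),
      ProbabilityTheory.cond_apply (hmA a) μ]
    have : {ω | D1 ω = a} ∩ Δ ⁻¹' {x : ℝ | x < 0} = ∅ := by
      ext ω
      simp only [Set.mem_inter_iff, Set.mem_preimage, Set.mem_setOf_eq, Set.mem_empty_iff_false,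
        iff_false, not_and, hΔ]
      intro h1
      have := (hs2 ω).1
      rw [h1]; linarith
    rw [this, measure_empty, mul_zero]
  have hpos : ν {x : ℝ | 0 < x} = 0 := by
    rw [← hAb, Measure.map_apply hmΔ (by exact measurableSet_lt measurable_const measurable_id),
      ProbabilityTheory.cond_apply (hmA b) μ]
    have : {ω | D1 ω = b} ∩ Δ ⁻¹' {x : ℝ | 0 < x} = ∅ := by
      ext ω
      simp only [Set.mem_inter_iff, Set.mem_preimage, Set.mem_setOf_eq, Set.mem_empty_iff_false,
        iff_false, not_and, hΔ]
      intro h1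
      have := (hs2 ω).2
      rw [h1]; linarith
    rw [this, measure_empty, mul_zero]
  have hcompl : ν {(0:ℝ)}ᶜ = 0 := by
    have hsub : ({(0:ℝ)}ᶜ : Set ℝ) ⊆ {x : ℝ | x < 0} ∪ {x : ℝ | 0 < x} := by
      intro x hx
      rcases lt_or_gt_of_ne (Set.mem_compl_singleton_iff.mp hx) with h | h
      · exact Or.inl h
      · exact Or.inr h
    exact measure_mono_null hsub (measure_union_null hneg hpos)
  have hzero : ν {(0:ℝ)} = 1 := by
    have := prob_compl_eq_zero_iff (μ := ν) (measurableSet_singleton (0:ℝ))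
    exact this.mp hcompl
  have hdirac : ν = Measure.dirac 0 := by
    ext s hs
    rw [Measure.dirac_apply' 0 hs]
    by_cases h0 : (0:ℝ) ∈ s
    · have h1 : ν s = ν (s ∩ {0}) + ν (s \ {0}) := (measure_inter_add_diff s (measurableSet_singleton 0)).symm
      have h2 : ν (s \ {0}) = 0 := measure_mono_null (Set.diff_subset_compl s {0}) hcompl
      have h3 : s ∩ {(0:ℝ)} = {0} := by
        rw [Set.inter_eq_right.mpr]
        simpa using h0
      rw [h1, h2, h3, hzero, add_zero, Set.indicator_of_mem h0, Pi.one_apply]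
    · have : s ⊆ {(0:ℝ)}ᶜ := fun x hx => by
        simp only [Set.mem_compl_singleton_iff]
        rintro rfl
        exact h0 hx
      rw [measure_mono_null this hcompl, Set.indicator_of_notMem h0]
  exact hnd a (Or.inl rfl) 0 (hAa.trans hdirac)
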